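/- The function f(x) = e^{−x}·(1 − e^{−x/2}·(1 + x/2)) is nondecreasing on the interval [0,1]; in particular, for all 0 ≤ x ≤ 1, f(x) ≤ f(1) = 1/e − 3/(2·e^{3/2}) < 1/30. -/

import Mathlib

open Real

lemma exp_half_lt : exp (1/2 : ℝ) < 7/4 := by
  have h2 : exp (1/2 : ℝ) ^ 2 = exp 1 := by
    rw [← Real.exp_nat_mul]; norm_num
  have he : exp 1 < 2.7182818286 := Real.exp_one_lt_d9
  nlinarith [Real.exp_pos (1/2 : ℝ)]

lemma key_bound {x : ℝ} (hx0 : 0 ≤ x) (hx1 : x ≤ 1) :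
    exp (x/2) ≤ 1 + 3*x/4 := by
  have h := convexOn_exp.2 (Set.mem_univ (0:ℝ)) (Set.mem_univ (1/2 : ℝ))
    (by linarith : (0:ℝ) ≤ 1 - x) hx0 (by ring)
  simp only [smul_eq_mul, mul_zero, zero_add, Real.exp_zero, mul_one] at h
  have : (1 - x) * 1 + x * exp (1/2) ≤ 1 + 3*x/4 := by
    nlinarith [exp_half_lt]
  calc exp (x/2) = exp (x * (1/2)) := by ring_nf
    _ ≤ (1-x) * 1 + x * exp (1/2) := by simpa using h
    _ ≤ 1 + 3*x/4 := this

lemma hasDeriv (x : ℝ) :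
    HasDerivAt (fun x : ℝ => exp (-x) * (1 - exp (-x/2) * (1 + x/2)))
      (-exp (-x) + exp (-x) * exp (-x/2) * (1 + 3*x/4)) x := by
  have h1 : HasDerivAt (fun x : ℝ => exp (-x)) (-exp (-x)) x := by
    exact ((Real.hasDerivAt_exp (-x)).comp x (hasDerivAt_neg x)).congr_deriv (by ring)
  have h2 : HasDerivAt (fun x : ℝ => exp (-x/2)) (exp (-x/2) * (-1/2)) x := by
    have : HasDerivAt (fun x : ℝ => -x/2) (-1/2) x := by
      simpa using ((hasDerivAt_neg x).div_const 2)
    exact (Real.hasDerivAt_exp (-x/2)).comp x this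
  have h3 : HasDerivAt (fun x : ℝ => 1 + x/2) (1/2) x := by
    simpa using ((hasDerivAt_id x).div_const 2).const_add 1
  have h4 := ((hasDerivAt_const x (1:ℝ)).sub (h2.mul h3))
  have h5 := h1.mul h4
  refine h5.congr_deriv ?_
  simp only [Pi.sub_apply, Pi.mul_apply]
  ring

lemma mono : MonotoneOn (fun x : ℝ => exp (-x) * (1 - exp (-x/2) * (1 + x/2)))
    (Set.Icc (0 : ℝ) 1) := by
  apply monotoneOn_of_deriv_nonneg (convex_Icc 0 1)
  · apply Continuous.continuousOn; continuity
  · intro x _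
    exact (hasDeriv x).differentiableAt.differentiableWithinAt
  · intro x hx
    rw [interior_Icc, Set.mem_Ioo] at hx
    rw [(hasDeriv x).deriv]
    have hk := key_bound hx.1.le hx.2.le
    have he : exp (x/2) * exp (-x/2) = 1 := by
      rw [← Real.exp_add]; ring_nf; exact Real.exp_zero
    have h1 : (0:ℝ) < exp (-x) := Real.exp_pos _
    have h2 : (0:ℝ) < exp (-x/2) := Real.exp_pos _
    have h3 : (0:ℝ) < exp (x/2) := Real.exp_pos _
    have : 1 ≤ exp (-x/2) * (1 + 3*x/4) := by
      nlinarith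
    nlinarith

theorem display_ads_y_minus_coef_monotone :
    MonotoneOn (fun x : ℝ => exp (-x) * (1 - exp (-x/2) * (1 + x/2)))
      (Set.Icc (0 : ℝ) 1)
    ∧ (∀ x ∈ Set.Icc (0 : ℝ) 1,
        exp (-x) * (1 - exp (-x/2) * (1 + x/2))
          ≤ exp (-(1:ℝ)) * (1 - exp (-(1:ℝ)/2) * (1 + (1:ℝ)/2)))
    ∧ exp (-(1:ℝ)) * (1 - exp (-(1:ℝ)/2) * (1 + (1:ℝ)/2))
        = 1 / exp 1 - 3 / (2 * exp (3/2))
    ∧ 1 / exp 1 - 3 / (2 * exp (3/2)) < 1/30 := by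
  refine ⟨mono, ?_, ?_, ?_⟩
  · intro x hx
    exact mono hx (Set.right_mem_Icc.2 (by norm_num)) hx.2
  · have e1 : exp (-(1:ℝ)) = (exp 1)⁻¹ := Real.exp_neg 1
    have e2 : exp (-(1:ℝ)/2) = (exp ((1:ℝ)/2))⁻¹ := by
      rw [neg_div, Real.exp_neg]
    have hmul : exp 1 * exp ((1:ℝ)/2) = exp (3/2 : ℝ) := by
      rw [← Real.exp_add]; norm_num
    have p1 : (0:ℝ) < exp 1 := Real.exp_pos _
    have p2 : (0:ℝ) < exp ((1:ℝ)/2) := Real.exp_pos _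
    have p3 : (0:ℝ) < exp (3/2 : ℝ) := Real.exp_pos _
    rw [e1, e2]
    field_simp
    nlinarith [hmul, p1, p2, p3]
  · -- numeric bound
    set b := exp (1/2 : ℝ) with hb
    have hbpos : 0 < b := Real.exp_pos _
    have hb2 : b ^ 2 = exp 1 := by rw [hb, ← Real.exp_nat_mul]; norm_num
    have hb3 : b ^ 3 = exp (3/2 : ℝ) := by rw [hb, ← Real.exp_nat_mul]; norm_num
    have heu : exp 1 < 2.7182818286 := Real.exp_one_lt_d9
    have hel : 2.7182818283 < exp 1 := Real.exp_one_gt_d9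
    have hbu : b < 1.6487213 := by nlinarith
    have hbl : 1.6487212 < b := by nlinarith
    have hkey : 30 * b - 45 < b ^ 3 := by nlinarith
    have h1 : (0:ℝ) < exp 1 := Real.exp_pos _
    have h3 : (0:ℝ) < exp (3/2) := Real.exp_pos _
    rw [div_sub_div _ _ h1.ne' (by positivity), div_lt_div_iff₀ (by positivity) (by norm_num)]
    rw [← hb2, ← hb3]
    nlinarith
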